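/- If B is a binary doubly even code of length 36 with minimum weight at least 16 and dual minimum weight at least 4, and C is a self-dual Z_4-code with residue code C^(1) = B, then A_4(C) is an extremal unimodular lattice in dimension 36, i.e., has minimum norm 4. -/
import Mathlib


open scoped Classical

/-- Hamming weight of a binary vector. -/
noncomputable def wt {n : ℕ} (c : Fin n → ZMod 2) : ℕ :=
  (Finset.univ.filter fun i => c i ≠ 0).card

/-- Reduction mod 2 of a vector over `ZMod 4`. -/
def res {n : ℕ} (c : Fin n → ZMod 4) : Fin n → ZMod 2 :=
  fun i => ZMod.castHom (by norm_num : (2:ℕ) ∣ 4) (ZMod 2) (c i)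

/-- The residue code of a `ZMod 4`-code. -/
def residueCode {n : ℕ} (C : Submodule (ZMod 4) (Fin n → ZMod 4)) :
    Set (Fin n → ZMod 2) :=
  {y | ∃ c ∈ C, y = res c}

/-- The lattice `A₄(C) = (1/2){x ∈ ℤⁿ : x mod 4 ∈ C}`. -/
def A4 {n : ℕ} (C : Submodule (ZMod 4) (Fin n → ZMod 4)) : Set (Fin n → ℝ) :=
  {v | ∃ x : Fin n → ℤ, (∀ i, v i = (x i : ℝ) / 2) ∧
    (fun i => (x i : ZMod 4)) ∈ C}

/-- The dual of a set of vectors in `ℝⁿ`. -/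
def dualLattice {n : ℕ} (L : Set (Fin n → ℝ)) : Set (Fin n → ℝ) :=
  {v | ∀ w ∈ L, ∃ m : ℤ, ∑ i, v i * w i = (m : ℝ)}

/- ### Auxiliary lemmas -/

lemma one_le_sq_of_ne (k : ℤ) (hk : k ≠ 0) : 1 ≤ k^2 := by
  nlinarith [Int.one_le_abs hk, sq_abs k, abs_nonneg k]

/-- Pointwise minimal square contribution for each residue class mod 4. -/
def e4 : ZMod 4 → ℤ := fun a => if a = 0 then 0 else if a = 2 then 4 else 1

lemma e4_le_sq (t : ℤ) : e4 ((t : ZMod 4)) ≤ t^2 := by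
  obtain ⟨q, r, hr0, hr4, ht⟩ : ∃ q r : ℤ, 0 ≤ r ∧ r < 4 ∧ t = 4*q + r :=
    ⟨t / 4, t % 4, Int.emod_nonneg t (by norm_num), Int.emod_lt_of_pos t (by norm_num), by omega⟩
  subst ht
  have h4 : ((4:ZMod 4)) = 0 := by decide
  have h1 : ((1:ZMod 4)) ≠ 0 := by decide
  have h12 : ((1:ZMod 4)) ≠ 2 := by decide
  have h2 : ((2:ZMod 4)) ≠ 0 := by decide
  have h3 : ((3:ZMod 4)) ≠ 0 := by decide
  have h32 : ((3:ZMod 4)) ≠ 2 := by decide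
  have e1 : (1:ℤ) ≤ (4*q+1)^2 := one_le_sq_of_ne _ (by omega)
  have e3 : (1:ℤ) ≤ (4*q+3)^2 := one_le_sq_of_ne _ (by omega)
  have e2 : (4:ℤ) ≤ (4*q+2)^2 := by
    have := one_le_sq_of_ne (2*q+1) (by omega)
    nlinarith
  interval_cases r <;>
    simp only [e4] <;> push_cast <;>
    simp only [h4, zero_mul, zero_add, if_pos rfl, h1, h12, h2, h3, h32, if_false, if_true,
      reduceIte] <;>
    nlinarith [sq_nonneg q]

lemma sq_ge_16 (t : ℤ) (h : (t : ZMod 4) = 0) (ht : t ≠ 0) : (16:ℤ) ≤ t^2 := by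
  have h4 : (4:ℤ) ∣ t := by
    have := (ZMod.intCast_zmod_eq_zero_iff_dvd t 4).mp h
    exact_mod_cast this
  obtain ⟨k, rfl⟩ := h4
  have hk : k ≠ 0 := by rintro rfl; simp at ht
  have : 1 ≤ k^2 := one_le_sq_of_ne k hk
  nlinarith

lemma f_le_e4 : ∀ a : ZMod 4,
    (if ZMod.castHom (by norm_num : (2:ℕ) ∣ 4) (ZMod 2) a ≠ 0 then (1:ℤ) else 0) ≤ e4 a := by
  decide

lemma e4_of_even : ∀ a : ZMod 4, ZMod.castHom (by norm_num : (2:ℕ) ∣ 4) (ZMod 2) a = 0 →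
    e4 a = 4 * (if a = 2 then 1 else 0) := by decide

lemma val_of_even : ∀ a : ZMod 4, ZMod.castHom (by norm_num : (2:ℕ) ∣ 4) (ZMod 2) a = 0 →
    ((a.val : ℤ)) = 2 * (if a = 2 then 1 else 0) := by decide

lemma two_of_even : ∀ a : ZMod 4, ZMod.castHom (by norm_num : (2:ℕ) ∣ 4) (ZMod 2) a = 0 →
    a ≠ 0 → a = 2 := by decide

lemma val_cast2 : ∀ a : ZMod 4,
    (((a.val : ℤ)) : ZMod 2) = ZMod.castHom (by norm_num : (2:ℕ) ∣ 4) (ZMod 2) a := by decide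

lemma intCast_val4 : ∀ a : ZMod 4, (((a.val : ℤ)) : ZMod 4) = a := by decide

lemma ite_cast2 (p : Prop) [Decidable p] :
    (Int.cast (if p then (1:ℤ) else 0) : ZMod 2) = (if p then (1:ZMod 2) else 0) := by
  by_cases h : p <;> simp [h]

lemma wt_cast {n : ℕ} (c : Fin n → ZMod 2) :
    (wt c : ℤ) = ∑ i, (if c i ≠ 0 then (1:ℤ) else 0) := by
  rw [wt, Finset.card_filter]
  push_cast [apply_ite (Nat.cast : ℕ → ℤ)]
  rfl

/-- The Euclidean-weight lower bound `16 ≤ d_E(c)` for nonzero codewords. -/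
lemma dE_ge (B : Submodule (ZMod 2) (Fin 36 → ZMod 2))
    (hmin : ∀ c ∈ B, c ≠ 0 → 16 ≤ wt c)
    (hdualB : ∀ x : Fin 36 → ZMod 2,
      (∀ c ∈ B, ∑ i, x i * c i = 0) → x ≠ 0 → 4 ≤ wt x)
    (C : Submodule (ZMod 4) (Fin 36 → ZMod 4))
    (hsd : ∀ x : Fin 36 → ZMod 4, x ∈ C ↔ ∀ c ∈ C, ∑ i, x i * c i = 0)
    (hres : residueCode C = (B : Set (Fin 36 → ZMod 2)))
    (c : Fin 36 → ZMod 4) (hc : c ∈ C) (hc0 : c ≠ 0) :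
    (16:ℤ) ≤ ∑ i, e4 (c i) := by
  by_cases hr : res c = 0
  · have hev : ∀ i, ZMod.castHom (by norm_num : (2:ℕ) ∣ 4) (ZMod 2) (c i) = 0 :=
      fun i => congrFun hr i
    set d : Fin 36 → ZMod 2 := fun i => if c i = 2 then 1 else 0 with hd
    have hd0 : d ≠ 0 := by
      obtain ⟨i, hi⟩ : ∃ i, c i ≠ 0 := by
        by_contra h; push_neg at h; exact hc0 (funext h)
      have h2 : c i = 2 := two_of_even _ (hev i) hi
      intro h
      have := congrFun h i
      simp [hd, h2] at this
    have horth : ∀ b ∈ B, ∑ i, d i * b i = 0 := by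
      intro b hb
      have hb' : b ∈ residueCode C := by rw [hres]; exact hb
      obtain ⟨c', hc', rfl⟩ := hb'
      have hz : ∑ i, c i * c' i = 0 := (hsd c).mp hc c' hc'
      set S : ℤ := ∑ i, (if c i = 2 then (1:ℤ) else 0) * ((c' i).val : ℤ) with hS
      have h2S : ((2 * S : ℤ) : ZMod 4) = 0 := by
        have h : 2 * S = ∑ i, ((c i).val : ℤ) * ((c' i).val : ℤ) := by
          rw [hS, Finset.mul_sum]
          refine Finset.sum_congr rfl fun i _ => ?_
          rw [val_of_even _ (hev i)]; ring
        rw [h, Int.cast_sum]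
        rw [show ∑ i, ((((c i).val : ℤ) * ((c' i).val : ℤ) : ℤ) : ZMod 4)
            = ∑ i, c i * c' i from
          Finset.sum_congr rfl fun i _ => by rw [Int.cast_mul, intCast_val4, intCast_val4]]
        exact hz
      have hdvd : (4:ℤ) ∣ 2 * S := by
        exact_mod_cast (ZMod.intCast_zmod_eq_zero_iff_dvd (2*S) 4).mp h2S
      have h2dvd : (2:ℤ) ∣ S := by omega
      have hS2 : ((S : ℤ) : ZMod 2) = 0 :=
        (ZMod.intCast_zmod_eq_zero_iff_dvd S 2).mpr (by exact_mod_cast h2dvd)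
      calc ∑ i, d i * res c' i = ((S : ℤ) : ZMod 2) := by
            rw [hS, Int.cast_sum]
            refine Finset.sum_congr rfl fun i _ => ?_
            rw [Int.cast_mul, ite_cast2, val_cast2]
            rfl
        _ = 0 := hS2
    have hwt : 4 ≤ wt d := hdualB d horth hd0
    have hsum : ∑ i, e4 (c i) = 4 * (wt d : ℤ) := by
      rw [wt_cast, Finset.mul_sum]
      refine Finset.sum_congr rfl fun i _ => ?_
      rw [e4_of_even _ (hev i)]
      by_cases h2 : c i = 2 <;> simp [hd, h2]
    rw [hsum]
    omega
  · have hb : res c ∈ B := by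
      have : res c ∈ residueCode C := ⟨c, hc, rfl⟩
      rwa [hres] at this
    have h16 : 16 ≤ wt (res c) := hmin _ hb hr
    calc (16:ℤ) ≤ (wt (res c) : ℤ) := by exact_mod_cast h16
      _ = ∑ i, (if res c i ≠ 0 then (1:ℤ) else 0) := wt_cast _
      _ ≤ ∑ i, e4 (c i) := Finset.sum_le_sum fun i _ => f_le_e4 (c i)

/-- The doubled standard basis vectors lie in `A4 C`. -/
lemma A4_double {n : ℕ} (C : Submodule (ZMod 4) (Fin n → ZMod 4)) (j : Fin n) :
    (fun i => if i = j then (2:ℝ) else 0) ∈ A4 C := by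
  refine ⟨fun i => if i = j then 4 else 0, fun i => ?_, ?_⟩
  · by_cases h : i = j <;> simp [h] <;> norm_num
  · have h0 : (fun i => (((if i = j then 4 else 0 : ℤ)) : ZMod 4)) = (0 : Fin n → ZMod 4) := by
      funext i
      by_cases h : i = j <;> simp [h]
      decide
    rw [h0]; exact C.zero_mem

theorem stmt10 (B : Submodule (ZMod 2) (Fin 36 → ZMod 2))
    (hde : ∀ c ∈ B, 4 ∣ wt c)
    (hmin : ∀ c ∈ B, c ≠ 0 → 16 ≤ wt c)
    (hdualB : ∀ x : Fin 36 → ZMod 2,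
      (∀ c ∈ B, ∑ i, x i * c i = 0) → x ≠ 0 → 4 ≤ wt x)
    (C : Submodule (ZMod 4) (Fin 36 → ZMod 4))
    (hsd : ∀ x : Fin 36 → ZMod 4, x ∈ C ↔ ∀ c ∈ C, ∑ i, x i * c i = 0)
    (hres : residueCode C = (B : Set (Fin 36 → ZMod 2))) :
    A4 C = dualLattice (A4 C) ∧
      sInf {r : ℝ | ∃ v ∈ A4 C, v ≠ 0 ∧ ∑ i, v i * v i = r} = 4 := by
  -- the quantitative bound : 16 ≤ ∑ xᵢ² for nonzero integer vectors with x mod 4 ∈ C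
  have key : ∀ x : Fin 36 → ℤ, (fun i => (x i : ZMod 4)) ∈ C → x ≠ 0 →
      (16:ℤ) ≤ ∑ i, (x i)^2 := by
    intro x hx hx0
    by_cases hz : (fun i => (x i : ZMod 4)) = (0 : Fin 36 → ZMod 4)
    · obtain ⟨i, hi⟩ : ∃ i, x i ≠ 0 := by
        by_contra h; push_neg at h; exact hx0 (funext h)
      have h1 : (16:ℤ) ≤ (x i)^2 := sq_ge_16 _ (congrFun hz i) hi
      calc (16:ℤ) ≤ (x i)^2 := h1
        _ ≤ ∑ i, (x i)^2 := Finset.single_le_sum (f := fun j => (x j)^2) (fun j _ => sq_nonneg _) (Finset.mem_univ i)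
    · have h := dE_ge B hmin hdualB C hsd hres _ hx hz
      calc (16:ℤ) ≤ ∑ i, e4 ((x i : ZMod 4)) := h
        _ ≤ ∑ i, (x i)^2 := Finset.sum_le_sum fun i _ => e4_le_sq _
  -- lower bound for the norm of nonzero lattice vectors
  have norm_ge : ∀ v ∈ A4 C, v ≠ (0 : Fin 36 → ℝ) → (4:ℝ) ≤ ∑ i, v i * v i := by
    rintro v ⟨x, hvx, hxC⟩ hv0
    have hx0 : x ≠ 0 := by
      rintro rfl
      apply hv0
      funext i
      rw [hvx i]
      simp
    have h16 := key x hxC hx0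
    have hnorm : ∑ i, v i * v i = ((∑ i, (x i)^2 : ℤ) : ℝ) / 4 := by
      push_cast
      rw [Finset.sum_div]
      exact Finset.sum_congr rfl fun i _ => by rw [hvx i]; ring
    rw [hnorm]
    have : (16:ℝ) ≤ ((∑ i, (x i)^2 : ℤ) : ℝ) := by exact_mod_cast h16
    linarith
  constructor
  · -- unimodularity
    apply Set.Subset.antisymm
    · rintro v ⟨x, hvx, hxC⟩ w ⟨y, hwy, hyC⟩
      have hz : ∑ i, ((x i : ZMod 4)) * ((y i : ZMod 4)) = 0 := (hsd _).mp hxC _ hyC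
      have hcast : ((∑ i, x i * y i : ℤ) : ZMod 4) = 0 := by
        rw [Int.cast_sum]
        rw [show ∑ i, (((x i * y i : ℤ)) : ZMod 4) = ∑ i, ((x i : ZMod 4)) * ((y i : ZMod 4))
          from Finset.sum_congr rfl fun i _ => by rw [Int.cast_mul]]
        exact hz
      obtain ⟨m, hm⟩ : (4:ℤ) ∣ ∑ i, x i * y i := by
        exact_mod_cast (ZMod.intCast_zmod_eq_zero_iff_dvd _ 4).mp hcast
      refine ⟨m, ?_⟩
      calc ∑ i, v i * w i = ((∑ i, x i * y i : ℤ) : ℝ) / 4 := by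
            push_cast
            rw [Finset.sum_div]
            exact Finset.sum_congr rfl fun i _ => by rw [hvx i, hwy i]; ring
        _ = (m : ℝ) := by rw [hm]; push_cast; ring
    · intro v hv
      have hbasis : ∀ j, ∃ m : ℤ, v j * 2 = (m : ℝ) := by
        intro j
        obtain ⟨m, hm⟩ := hv _ (A4_double C j)
        refine ⟨m, ?_⟩
        rw [← hm]
        rw [show ∑ i, v i * (if i = j then (2:ℝ) else 0) = v j * 2 from ?_]
        have h1 : ∀ i, v i * (if i = j then (2:ℝ) else 0)
            = if i = j then v i * 2 else 0 := by
          intro i; by_cases h : i = j <;> simp [h]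
        rw [Finset.sum_congr rfl fun i _ => h1 i, Finset.sum_ite_eq' Finset.univ j]
        simp
      choose m hm using hbasis
      refine ⟨m, fun i => by rw [← hm i]; ring, ?_⟩
      rw [hsd]
      intro c hcC
      set y : Fin 36 → ℤ := fun i => ((c i).val : ℤ) with hy
      have hyc : ∀ i, ((y i : ZMod 4)) = c i := fun i => intCast_val4 _
      have hwA : (fun i => (y i : ℝ)/2) ∈ A4 C :=
        ⟨y, fun i => rfl, by rw [show (fun i => (y i : ZMod 4)) = c from funext hyc]; exact hcC⟩
      obtain ⟨k, hk⟩ := hv _ hwA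
      have hint : ∑ i, m i * y i = 4 * k := by
        have h1 : ((∑ i, m i * y i : ℤ) : ℝ) = ((4 * k : ℤ) : ℝ) := by
          push_cast
          calc ∑ i, (m i : ℝ) * (y i : ℝ)
              = 4 * ∑ i, v i * ((y i : ℝ)/2) := by
                rw [Finset.mul_sum]
                exact Finset.sum_congr rfl fun i _ => by rw [← hm i]; ring
            _ = 4 * (k:ℝ) := by rw [hk]
        exact_mod_cast h1
      have hcast : ((∑ i, m i * y i : ℤ) : ZMod 4) = 0 := by
        rw [hint]
        push_cast
        rw [show ((4:ZMod 4)) = 0 from by decide]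
        ring
      calc ∑ i, (m i : ZMod 4) * c i
          = ((∑ i, m i * y i : ℤ) : ZMod 4) := by
            rw [Int.cast_sum]
            exact (Finset.sum_congr rfl fun i _ => by rw [Int.cast_mul, hyc i]).symm
        _ = 0 := hcast
  · -- minimum norm is 4
    set S : Set ℝ := {r : ℝ | ∃ v ∈ A4 C, v ≠ 0 ∧ ∑ i, v i * v i = r} with hSdef
    have mem4 : (4:ℝ) ∈ S := by
      refine ⟨fun i => if i = (0:Fin 36) then (2:ℝ) else 0, A4_double C 0, ?_, ?_⟩
      · intro h
        have := congrFun h 0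
        norm_num at this
      · have h1 : ∀ i : Fin 36, (if i = (0:Fin 36) then (2:ℝ) else 0)
            * (if i = (0:Fin 36) then (2:ℝ) else 0) = if i = 0 then (4:ℝ) else 0 := by
          intro i; by_cases h : i = 0 <;> simp [h]; norm_num
        rw [Finset.sum_congr rfl fun i _ => h1 i, Finset.sum_ite_eq' Finset.univ 0]
        simp
    have lb : ∀ r ∈ S, (4:ℝ) ≤ r := by
      rintro r ⟨v, hvA, hv0, rfl⟩
      exact norm_ge v hvA hv0
    exact le_antisymm (csInf_le ⟨4, lb⟩ mem4) (le_csInf ⟨4, mem4⟩ lb)
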